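/- Let K > 0 be a real number and let u be a complex number with Re(u) > 1. Then the bilateral Laplace transform of the call payoff exists and satisfies ∫_{-∞}^{∞} max(e^x - K, 0) · e^{-u x} dx = K^{1-u} / (u(u-1)). -/

import Mathlib

open MeasureTheory Complex Set Filter

lemma cexp_integrableOn_Ioi (a : ℝ) {c : ℂ} (hc : c.re < 0) :
    IntegrableOn (fun x : ℝ => Complex.exp (c * x)) (Ioi a) := by
  have h : IntegrableOn (fun x : ℝ => Real.exp (-(-c.re) * x)) (Ioi a) :=
    exp_neg_integrableOn_Ioi a (neg_pos.mpr hc)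
  refine h.integrable.mono' ?_ ?_
  · exact (Complex.continuous_exp.comp (continuous_const.mul Complex.continuous_ofReal)).aestronglyMeasurable
  · filter_upwards with x
    simp [Complex.norm_exp]

lemma integral_cexp_Ioi (a : ℝ) {c : ℂ} (hc : c.re < 0) :
    ∫ x in Ioi a, Complex.exp (c * x) = -Complex.exp (c * a) / c := by
  have hc0 : c ≠ 0 := fun h => by simp [h] at hc
  have hderiv : ∀ x ∈ Ici a, HasDerivAt (fun y : ℝ => Complex.exp (c * y) / c)
      (Complex.exp (c * x)) x := by
    intro x _
    have h1 : HasDerivAt (fun y : ℝ => c * (y : ℂ)) c x := by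
      simpa using ((hasDerivAt_id x).ofReal_comp.const_mul c)
    have := (h1.cexp).div_const c
    simpa [mul_comm, mul_div_assoc, mul_div_cancel_left₀ _ hc0] using this
  have htend : Tendsto (fun x : ℝ => Complex.exp (c * x) / c) atTop (nhds 0) := by
    rw [tendsto_zero_iff_norm_tendsto_zero]
    have h2 : Tendsto (fun x : ℝ => c.re * x) atTop atBot :=
      Tendsto.const_mul_atTop_of_neg hc tendsto_id
    have h3 : Tendsto (fun x : ℝ => Real.exp (c.re * x) / ‖c‖) atTop (nhds 0) := by
      simpa using (Real.tendsto_exp_atBot.comp h2).div_const ‖c‖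
    refine h3.congr fun x => ?_
    simp [Complex.norm_exp]
  have := integral_Ioi_of_hasDerivAt_of_tendsto' hderiv (cexp_integrableOn_Ioi a hc) htend
  rw [this]; ring

/-- Bilateral Laplace transform of the call payoff: for `K > 0` and `Re u > 1`,
`∫ (e^x - K)_+ e^{-ux} dx = K^(1-u) / (u (u-1))`. -/
theorem call_payoff_laplace_transform (K : ℝ) (hK : 0 < K) (u : ℂ) (hu : 1 < u.re) :
    Integrable (fun x : ℝ => ((max (Real.exp x - K) 0 : ℝ) : ℂ) * Complex.exp (-u * x)) ∧
    ∫ x : ℝ, ((max (Real.exp x - K) 0 : ℝ) : ℂ) * Complex.exp (-u * x)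
      = (K : ℂ) ^ ((1 : ℂ) - u) / (u * (u - 1)) := by
  have hu0 : u ≠ 0 := fun h => by simp [h] at hu; linarith
  have hu1 : u ≠ 1 := fun h => by simp [h] at hu
  have hre1 : ((1 : ℂ) - u).re < 0 := by simp; linarith
  have hre2 : (-u).re < 0 := by simp; linarith
  set L := Real.log K with hL
  have hfun : (fun x : ℝ => ((max (Real.exp x - K) 0 : ℝ) : ℂ) * Complex.exp (-u * x))
      = (Ioi L).indicator (fun x : ℝ =>
          Complex.exp ((1 - u) * x) - (K : ℂ) * Complex.exp (-u * x)) := by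
    funext x
    by_cases hx : x ∈ Ioi L
    · rw [indicator_of_mem hx]
      have hKx : K < Real.exp x := by
        have := Real.exp_lt_exp.mpr (show L < x from hx)
        rwa [Real.exp_log hK] at this
      rw [max_eq_left (by linarith)]
      push_cast [Complex.ofReal_exp]
      rw [sub_mul, ← Complex.exp_add]
      ring_nf
    · rw [indicator_of_notMem hx]
      have hx' : x ≤ L := le_of_not_gt hx
      have : Real.exp x ≤ K := by
        calc Real.exp x ≤ Real.exp L := Real.exp_le_exp.mpr hx'
        _ = K := Real.exp_log hK
      rw [max_eq_right (by linarith)]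
      simp
  have hint : IntegrableOn (fun x : ℝ =>
      Complex.exp ((1 - u) * x) - (K : ℂ) * Complex.exp (-u * x)) (Ioi L) :=
    (cexp_integrableOn_Ioi L hre1).sub ((cexp_integrableOn_Ioi L hre2).const_mul _)
  constructor
  · rw [hfun]
    exact (integrable_indicator_iff measurableSet_Ioi).mpr hint
  · rw [hfun, integral_indicator measurableSet_Ioi,
      integral_sub (cexp_integrableOn_Ioi L hre1) ((cexp_integrableOn_Ioi L hre2).const_mul _),
      integral_const_mul, integral_cexp_Ioi L hre1, integral_cexp_Ioi L hre2]
    have hlog : (L : ℂ) = Complex.log K := Complex.ofReal_log hK.le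
    have e1 : Complex.exp ((1 - u) * L) = (K : ℂ) ^ ((1 : ℂ) - u) := by
      rw [hlog, Complex.cpow_def_of_ne_zero (by exact_mod_cast hK.ne'), mul_comm]
    have e2 : (K : ℂ) * Complex.exp (-u * L) = (K : ℂ) ^ ((1 : ℂ) - u) := by
      rw [hlog, show -u * Complex.log K = Complex.log K * (-u) by ring,
        ← Complex.cpow_def_of_ne_zero (by exact_mod_cast hK.ne')]
      rw [show (1 : ℂ) - u = 1 + -u by ring,
        Complex.cpow_add _ _ (by exact_mod_cast hK.ne'), Complex.cpow_one]
    rw [e1, neg_div_neg_eq, ← mul_div_assoc, e2]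
    have h1u : (1 : ℂ) - u ≠ 0 := sub_ne_zero.mpr (fun h => hu1 h.symm)
    have hu1' : u - 1 ≠ 0 := sub_ne_zero.mpr hu1
    field_simp
    ring
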